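/- Let 0 < p < 1 and p < q ≤ 1, and let β = (q/p)/((q/p) − 1) be the conjugate exponent of q/p. Define the map ψ on real sequences by ψ(z)_k = |z_k|^{1/p}·sgn(z_k). Then ψ maps ℓ^{q/p} into ℓ^{β}, and ψ is weakly sequentially continuous: if (z^n) is a sequence in ℓ^{q/p} converging weakly to z̄ ∈ ℓ^{q/p}, then ψ(z^n) converges weakly to ψ(z̄) in ℓ^{β}. -/

import Mathlib

/-- `z` belongs to `ℓ^s`: the series `Σ_k |z_k|^s` converges. -/
def MemLp' (s : ℝ) (z : ℕ → ℝ) : Prop :=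
  Summable fun k => |z k| ^ s

/-- Weak convergence in `ℓ^s`: testing against every element of the dual `ℓ^{s/(s-1)}`. -/
def WeakConvLp (s : ℝ) (zn : ℕ → ℕ → ℝ) (zb : ℕ → ℝ) : Prop :=
  ∀ v : ℕ → ℝ, MemLp' (s / (s - 1)) v →
    Filter.Tendsto (fun n => ∑' k, v k * zn n k) Filter.atTop (nhds (∑' k, v k * zb k))

/-- The reparametrization map `ψ(z)_k = |z_k|^{1/p} · sgn(z_k)`. -/
noncomputable def psi (p : ℝ) (z : ℕ → ℝ) : ℕ → ℝ :=
  fun k => |z k| ^ (1 / p) * Real.sign (z k)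

open Filter Topology

set_option maxHeartbeats 1000000

section Aux

/-- Hölder pairing for sequences. -/
lemma pairing {r r' : ℝ} (hrr' : r.HolderConjugate r') (v z : ℕ → ℝ)
    (hv : Summable fun k => |v k| ^ r) (hz : Summable fun k => |z k| ^ r') :
    Summable (fun k => v k * z k) ∧
      |∑' k, v k * z k| ≤ (∑' k, |v k| ^ r) ^ (1/r) * (∑' k, |z k| ^ r') ^ (1/r') := by
  obtain ⟨h1, h2⟩ := Real.summable_and_inner_le_Lp_mul_Lq_tsum_of_nonneg hrr'
    (fun i => abs_nonneg (v i)) (fun i => abs_nonneg (z i)) hv hz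
  have habs : Summable fun k => |v k * z k| := by simpa [abs_mul] using h1
  have hnorm : Summable fun k => ‖v k * z k‖ := by
    simpa only [Real.norm_eq_abs] using habs
  have h3 : ‖∑' k, v k * z k‖ ≤ ∑' k, ‖v k * z k‖ :=
    norm_tsum_le_tsum_norm hnorm
  simp only [Real.norm_eq_abs] at h3
  refine ⟨habs.of_abs, h3.trans ?_⟩
  calc ∑' k, |v k * z k| = ∑' k, |v k| * |z k| := by simp [abs_mul]
    _ ≤ _ := h2

lemma coord_le {s : ℝ} (hs : 0 < s) (z : ℕ → ℝ) (hz : Summable fun k => |z k| ^ s) (k : ℕ) :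
    |z k| ≤ (∑' j, |z j| ^ s) ^ (1/s) := by
  have h1 : |z k| ^ s ≤ ∑' j, |z j| ^ s :=
    Summable.le_tsum hz k (fun j _ => Real.rpow_nonneg (abs_nonneg _) s)
  have h2 : (|z k| ^ s) ^ (1/s) = |z k| := by
    rw [← Real.rpow_mul (abs_nonneg _), mul_one_div_cancel hs.ne', Real.rpow_one]
  rw [← h2]
  exact Real.rpow_le_rpow (Real.rpow_nonneg (abs_nonneg _) s) h1 (by positivity)

lemma sign_mul_self_eq_abs (x : ℝ) : Real.sign x * x = |x| := by
  rcases lt_trichotomy x 0 with h | h | h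
  · rw [Real.sign_of_neg h, abs_of_neg h]; ring
  · simp [h]
  · rw [Real.sign_of_pos h, abs_of_pos h]; ring

lemma abs_rpow_mul_sign {c : ℝ} (hc : c ≠ 0) (x : ℝ) :
    |(|x| ^ c * Real.sign x)| = |x| ^ c := by
  rcases lt_trichotomy x 0 with h | h | h
  · rw [Real.sign_of_neg h, abs_mul, abs_neg, abs_one, mul_one,
      abs_of_nonneg (Real.rpow_nonneg (abs_nonneg _) _)]
  · simp only [h, Real.sign_zero, mul_zero, abs_zero]
    exact (Real.zero_rpow hc).symm
  · rw [Real.sign_of_pos h, mul_one, abs_of_nonneg (Real.rpow_nonneg (abs_nonneg _) _)]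

lemma abs_psi {p : ℝ} (hp : 0 < p) (z : ℕ → ℝ) (k : ℕ) :
    |psi p z k| = |z k| ^ (1 / p) :=
  abs_rpow_mul_sign (by positivity) (z k)

lemma psi_memLp {p s β : ℝ} (hp : 0 < p) (hs : 0 < s) (hsp : s ≤ β / p)
    (z : ℕ → ℝ) (hz : Summable fun k => |z k| ^ s)
    {M : ℝ} (hbd : ∀ k, |z k| ≤ M) :
    Summable (fun k => |psi p z k| ^ β) ∧
      ∑' k, |psi p z k| ^ β ≤ M ^ (β / p - s) * ∑' k, |z k| ^ s := by
  have hβp : 0 < β / p := lt_of_lt_of_le hs hsp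
  have he : ∀ k, |psi p z k| ^ β = |z k| ^ (β / p) := by
    intro k
    rw [abs_psi hp z k, ← Real.rpow_mul (abs_nonneg _)]
    congr 1
    field_simp
  have hle : ∀ k, |z k| ^ (β / p) ≤ |z k| ^ s * M ^ (β / p - s) := by
    intro k
    have : |z k| ^ (β / p) = |z k| ^ s * |z k| ^ (β / p - s) := by
      rw [← Real.rpow_add' (abs_nonneg _) (by rw [add_sub_cancel]; exact hβp.ne')]
      congr 1; ring
    rw [this]
    exact mul_le_mul_of_nonneg_left
      (Real.rpow_le_rpow (abs_nonneg _) (hbd k) (sub_nonneg.2 hsp))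
      (Real.rpow_nonneg (abs_nonneg _) _)
  have hsum2 : Summable fun k => |z k| ^ s * M ^ (β / p - s) := hz.mul_right _
  have hsum1 : Summable fun k => |psi p z k| ^ β := by
    apply Summable.of_nonneg_of_le (fun k => Real.rpow_nonneg (abs_nonneg _) _)
      (fun k => (he k) ▸ hle k) hsum2
  refine ⟨hsum1, ?_⟩
  calc ∑' k, |psi p z k| ^ β ≤ ∑' k, |z k| ^ s * M ^ (β / p - s) := by
        apply Summable.tsum_le_tsum (fun k => (he k) ▸ hle k) hsum1 hsum2
    _ = M ^ (β / p - s) * ∑' k, |z k| ^ s := by rw [tsum_mul_right, mul_comm]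

lemma psi_tendsto {p : ℝ} (hp : 0 < p) {a : ℕ → ℝ} {L : ℝ}
    (h : Tendsto a atTop (nhds L)) :
    Tendsto (fun n => |a n| ^ (1/p) * Real.sign (a n)) atTop
      (nhds (|L| ^ (1/p) * Real.sign L)) := by
  have hppos : (0:ℝ) < 1/p := by positivity
  have habs : Tendsto (fun n => |a n| ^ (1/p)) atTop (nhds (|L| ^ (1/p))) := by
    have hc : ContinuousAt (fun x : ℝ => x ^ (1/p)) |L| :=
      Real.continuousAt_rpow_const _ _ (Or.inr hppos.le)
    exact hc.tendsto.comp h.abs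
  rcases lt_trichotomy L 0 with hL | hL | hL
  · have hev : ∀ᶠ n in atTop, |a n| ^ (1/p) * Real.sign L = |a n| ^ (1/p) * Real.sign (a n) := by
      filter_upwards [h.eventually (eventually_lt_nhds hL)] with n hn
      rw [Real.sign_of_neg hn, Real.sign_of_neg hL]
    exact (habs.mul_const (Real.sign L)).congr' hev
  · subst hL
    simp only [Real.sign_zero, mul_zero]
    apply squeeze_zero_norm (a := fun n => |a n| ^ (1/p))
      (f := fun n => |a n| ^ (1 / p) * Real.sign (a n))
    · intro n
      rw [Real.norm_eq_abs]
      exact le_of_eq (abs_rpow_mul_sign hppos.ne' (a n))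
    · rw [show |(0:ℝ)| ^ (1/p) = 0 by rw [abs_zero]; exact Real.zero_rpow hppos.ne'] at habs
      exact habs
  · have hev : ∀ᶠ n in atTop, |a n| ^ (1/p) * Real.sign L = |a n| ^ (1/p) * Real.sign (a n) := by
      filter_upwards [h.eventually (eventually_gt_nhds hL)] with n hn
      rw [Real.sign_of_pos hn, Real.sign_of_pos hL]
    exact (habs.mul_const (Real.sign L)).congr' hev

lemma toReal_ofReal_beta {s β : ℝ} (hsconj : s.HolderConjugate β) :
    (ENNReal.ofReal β).toReal = β :=
  ENNReal.toReal_ofReal hsconj.symm.nonneg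

lemma lp_mem_summable {s β : ℝ} (hsconj : s.HolderConjugate β)
    [Fact (1 ≤ ENNReal.ofReal β)]
    (v : lp (fun _ : ℕ => ℝ) (ENNReal.ofReal β)) :
    Summable fun k => |(v : ∀ _ : ℕ, ℝ) k| ^ β := by
  have h := lp.memℓp v
  rw [memℓp_gen_iff (by rw [toReal_ofReal_beta hsconj]; exact hsconj.symm.pos)] at h
  simpa [Real.norm_eq_abs, toReal_ofReal_beta hsconj] using h

lemma mem_lp_of_summable {s β : ℝ} (hsconj : s.HolderConjugate β)
    {v : ℕ → ℝ} (hv : Summable fun k => |v k| ^ β) :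
    Memℓp v (ENNReal.ofReal β) := by
  apply memℓp_gen
  simp only [Real.norm_eq_abs, toReal_ofReal_beta hsconj]
  exact hv

/-- The pairing continuous linear functional on `ℓ^β` given by `z ∈ ℓ^s`. -/
noncomputable def TL {s β : ℝ} (hsconj : s.HolderConjugate β)
    [Fact (1 ≤ ENNReal.ofReal β)]
    (z : ℕ → ℝ) (hz : Summable fun k => |z k| ^ s) :
    lp (fun _ : ℕ => ℝ) (ENNReal.ofReal β) →L[ℝ] ℝ :=
  LinearMap.mkContinuous
    { toFun := fun v => ∑' k, (v : ∀ _ : ℕ, ℝ) k * z k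
      map_add' := by
        intro u v
        have hu := (pairing hsconj.symm _ z (lp_mem_summable hsconj u) hz).1
        have hv := (pairing hsconj.symm _ z (lp_mem_summable hsconj v) hz).1
        show (∑' k, ((u + v) : ∀ _ : ℕ, ℝ) k * z k)
            = (∑' k, (u : ∀ _ : ℕ, ℝ) k * z k) + ∑' k, (v : ∀ _ : ℕ, ℝ) k * z k
        rw [← Summable.tsum_add hu hv]
        exact tsum_congr fun k => by simp [add_mul]
      map_smul' := by
        intro c v
        show (∑' k, ((c • v) : ∀ _ : ℕ, ℝ) k * z k)
            = c • ∑' k, (v : ∀ _ : ℕ, ℝ) k * z k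
        rw [smul_eq_mul, ← tsum_mul_left]
        exact tsum_congr fun k => by simp [mul_assoc] }
    ((∑' k, |z k| ^ s) ^ (1/s))
    (by
      intro v
      have hb := (pairing hsconj.symm _ z (lp_mem_summable hsconj v) hz).2
      have hnorm : ‖v‖ = (∑' k, |(v : ∀ _ : ℕ, ℝ) k| ^ β) ^ (1/β) := by
        rw [lp.norm_eq_tsum_rpow (by rw [toReal_ofReal_beta hsconj]; exact hsconj.symm.pos) v]
        simp [Real.norm_eq_abs, toReal_ofReal_beta hsconj]
      show ‖∑' k, (v : ∀ _ : ℕ, ℝ) k * z k‖ ≤ (∑' k, |z k| ^ s) ^ (1/s) * ‖v‖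
      rw [Real.norm_eq_abs]
      calc |∑' k, (v : ∀ _ : ℕ, ℝ) k * z k|
          ≤ (∑' k, |(v : ∀ _ : ℕ, ℝ) k| ^ β) ^ (1/β) * (∑' k, |z k| ^ s) ^ (1/s) := hb
        _ = (∑' k, |z k| ^ s) ^ (1/s) * ‖v‖ := by rw [hnorm]; ring)

lemma TL_apply {s β : ℝ} (hsconj : s.HolderConjugate β)
    [Fact (1 ≤ ENNReal.ofReal β)]
    (z : ℕ → ℝ) (hz : Summable fun k => |z k| ^ s)
    (v : lp (fun _ : ℕ => ℝ) (ENNReal.ofReal β)) :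
    TL hsconj z hz v = ∑' k, (v : ∀ _ : ℕ, ℝ) k * z k := rfl

lemma TL_norm_lb {s β : ℝ} (hsconj : s.HolderConjugate β)
    [Fact (1 ≤ ENNReal.ofReal β)]
    (z : ℕ → ℝ) (hz : Summable fun k => |z k| ^ s) :
    (∑' k, |z k| ^ s) ^ (1/s) ≤ ‖TL hsconj z hz‖ := by
  set A := ∑' k, |z k| ^ s with hA
  have hA0 : 0 ≤ A := tsum_nonneg fun k => Real.rpow_nonneg (abs_nonneg _) _
  rcases eq_or_lt_of_le hA0 with h0 | hApos
  · rw [← h0, Real.zero_rpow hsconj.one_div_ne_zero]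
    exact norm_nonneg _
  · set w : ℕ → ℝ := fun k => |z k| ^ (s - 1) * Real.sign (z k) with hw
    have habsw : ∀ k, |w k| = |z k| ^ (s - 1) := fun k =>
      abs_rpow_mul_sign hsconj.sub_one_ne_zero (z k)
    have hwβ : Summable fun k => |w k| ^ β := by
      have : ∀ k, |w k| ^ β = |z k| ^ s := by
        intro k
        rw [habsw k, ← Real.rpow_mul (abs_nonneg _), hsconj.sub_one_mul_conj]
      exact hz.congr fun k => (this k).symm
    set W : lp (fun _ : ℕ => ℝ) (ENNReal.ofReal β) := ⟨w, mem_lp_of_summable hsconj hwβ⟩ with hWdef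
    have hWcoe : ∀ k, (W : ∀ _ : ℕ, ℝ) k = w k := fun k => rfl
    have hWnorm : ‖W‖ = A ^ (1/β) := by
      rw [lp.norm_eq_tsum_rpow (by rw [toReal_ofReal_beta hsconj]; exact hsconj.symm.pos) W]
      have h1 : ∀ k, ‖(W : ∀ _ : ℕ, ℝ) k‖ ^ (ENNReal.ofReal β).toReal = |z k| ^ s := by
        intro k
        rw [toReal_ofReal_beta hsconj, Real.norm_eq_abs, hWcoe k, habsw k,
          ← Real.rpow_mul (abs_nonneg _), hsconj.sub_one_mul_conj]
      rw [tsum_congr h1, toReal_ofReal_beta hsconj, ← hA]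
    have hTW : TL hsconj z hz W = A := by
      rw [TL_apply, hA]
      apply tsum_congr
      intro k
      rw [hWcoe k]
      calc w k * z k = |z k| ^ (s - 1) * (Real.sign (z k) * z k) := by
            rw [hw]; ring
        _ = |z k| ^ (s - 1) * |z k| ^ (1:ℝ) := by
            rw [sign_mul_self_eq_abs, Real.rpow_one]
        _ = |z k| ^ (s - 1 + 1) := (Real.rpow_add' (abs_nonneg _)
            (by rw [sub_add_cancel]; exact hsconj.ne_zero)).symm
        _ = |z k| ^ s := by rw [sub_add_cancel]
    have hub : A ≤ ‖TL hsconj z hz‖ * A ^ (1/β) := by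
      have h := (TL hsconj z hz).le_opNorm W
      have h2 : ‖TL hsconj z hz W‖ = A := by
        rw [hTW, Real.norm_eq_abs, abs_of_nonneg hA0]
      rw [h2, hWnorm] at h
      exact h
    have hAβpos : 0 < A ^ (1/β) := Real.rpow_pos_of_pos hApos _
    rw [← mul_le_mul_iff_of_pos_right hAβpos]
    calc A ^ (1/s) * A ^ (1/β) = A ^ (1/s + 1/β) := (Real.rpow_add hApos _ _).symm
      _ = A ^ (1:ℝ) := by rw [one_div, one_div, hsconj.inv_add_inv_eq_one]
      _ = A := Real.rpow_one A
      _ ≤ _ := hub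

lemma norm_bound {s β : ℝ} (hsconj : s.HolderConjugate β)
    (zn : ℕ → ℕ → ℝ)
    (hzn : ∀ n, Summable fun k => |zn n k| ^ s)
    (hbdd : ∀ v : ℕ → ℝ, (Summable fun k => |v k| ^ β) →
      ∃ c : ℝ, ∀ n, |∑' k, v k * zn n k| ≤ c) :
    ∃ C : ℝ, ∀ n, (∑' k, |zn n k| ^ s) ^ (1/s) ≤ C := by
  haveI : Fact (1 ≤ ENNReal.ofReal β) := ⟨ENNReal.one_le_ofReal.2 hsconj.symm.lt.le⟩
  have hpt : ∀ v : lp (fun _ : ℕ => ℝ) (ENNReal.ofReal β),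
      ∃ c, ∀ n, ‖TL hsconj (zn n) (hzn n) v‖ ≤ c := by
    intro v
    obtain ⟨c, hc⟩ := hbdd v (lp_mem_summable hsconj v)
    exact ⟨c, fun n => by rw [TL_apply, Real.norm_eq_abs]; exact hc n⟩
  obtain ⟨C', hC'⟩ := banach_steinhaus hpt
  exact ⟨C', fun n => (TL_norm_lb hsconj (zn n) (hzn n)).trans (hC' n)⟩

end Aux

theorem psi_weakly_sequentially_continuous
    (p q β : ℝ) (hp0 : 0 < p) (hp1 : p < 1) (hpq : p < q) (hq1 : q ≤ 1)
    (hβ : β = (q / p) / (q / p - 1))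
    (zn : ℕ → ℕ → ℝ) (zb : ℕ → ℝ)
    (hzn : ∀ n, MemLp' (q / p) (zn n)) (hzb : MemLp' (q / p) zb)
    (hconv : WeakConvLp (q / p) zn zb) :
    (∀ z : ℕ → ℝ, MemLp' (q / p) z → MemLp' β (psi p z)) ∧
    WeakConvLp β (fun n => psi p (zn n)) (psi p zb) := by
  set s := q / p with hsdef
  have hs1 : 1 < s := (one_lt_div hp0).mpr hpq
  have hspos : 0 < s := lt_trans one_pos hs1
  have hsconj : s.HolderConjugate β := by
    rw [hβ]
    exact Real.HolderConjugate.conjExponent hs1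
  have hβ1 : 1 < β := hsconj.symm.lt
  have hβpos : 0 < β := lt_trans one_pos hβ1
  have hqp1 : q - p ≤ 1 := by linarith
  have hqp0 : 0 < q - p := by
    have := (mul_lt_mul_of_pos_right ((one_lt_div hp0).mp hs1) hp0)
    linarith
  have hsp : s ≤ β / p := by
    have h1 : β / p = s / (q - p) := by
      rw [hβ, div_div]
      congr 1
      rw [hsdef]
      field_simp
    rw [h1, le_div_iff₀ hqp0]
    nlinarith [hspos]
  -- Part 1
  have part1 : ∀ z : ℕ → ℝ, MemLp' s z → MemLp' β (psi p z) := by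
    intro z hz
    have hbd : ∀ k, |z k| ≤ max 1 ((∑' j, |z j| ^ s) ^ (1/s)) :=
      fun k => (coord_le hspos z hz k).trans (le_max_right _ _)
    exact (psi_memLp hp0 hspos hsp z hz hbd).1
  refine ⟨part1, ?_⟩
  -- exponent conversions
  have hse : s / (s - 1) = β := hsconj.conjugate_eq.symm
  have hβe : β / (β - 1) = s := hsconj.symm.conjugate_eq.symm
  -- coordinatewise convergence
  have hcoord : ∀ k0, Tendsto (fun n => zn n k0) atTop (nhds (zb k0)) := by
    intro k0
    have hvmem : MemLp' (s / (s - 1)) (fun k => if k = k0 then (1:ℝ) else 0) := by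
      unfold MemLp'
      apply summable_of_ne_finset_zero (s := {k0})
      intro k hk
      have hk' : k ≠ k0 := by simpa using hk
      simp only [if_neg hk', abs_zero]
      exact Real.zero_rpow (by rw [hse]; exact hβpos.ne')
    have h := hconv _ hvmem
    have heq : ∀ w : ℕ → ℝ, (∑' k, (if k = k0 then (1:ℝ) else 0) * w k) = w k0 := by
      intro w
      rw [tsum_eq_single k0 (fun b hb => by rw [if_neg hb, zero_mul])]
      rw [if_pos rfl, one_mul]
    simp only [heq] at h
    exact h
  have hpsi_coord : ∀ k, Tendsto (fun n => psi p (zn n) k) atTop (nhds (psi p zb k)) := by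
    intro k
    have := psi_tendsto hp0 (hcoord k)
    simpa [psi] using this
  -- uniform norm bound via Banach-Steinhaus
  have hbdd : ∀ v : ℕ → ℝ, (Summable fun k => |v k| ^ β) →
      ∃ c : ℝ, ∀ n, |∑' k, v k * zn n k| ≤ c := by
    intro v hv
    have hvmem : MemLp' (s / (s - 1)) v := by rw [MemLp', hse]; exact hv
    obtain ⟨c, hc⟩ := (hconv v hvmem).norm.bddAbove_range
    refine ⟨c, fun n => ?_⟩
    have := hc (Set.mem_range_self (f := fun n => ‖∑' k, v k * zn n k‖) n)
    rwa [Real.norm_eq_abs] at this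
  obtain ⟨C, hC⟩ := norm_bound hsconj zn hzn hbdd
  set M := max 1 C with hMdef
  have hM0 : 0 < M := lt_of_lt_of_le one_pos (le_max_left _ _)
  have hCM : ∀ n, (∑' k, |zn n k| ^ s) ^ (1/s) ≤ M :=
    fun n => (hC n).trans (le_max_right _ _)
  have hcbd : ∀ n k, |zn n k| ≤ M :=
    fun n k => (coord_le hspos _ (hzn n) k).trans (hCM n)
  have htsum_nonneg : ∀ n, (0:ℝ) ≤ ∑' k, |zn n k| ^ s :=
    fun n => tsum_nonneg fun k => Real.rpow_nonneg (abs_nonneg _) _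
  have hsum_le : ∀ n, ∑' k, |zn n k| ^ s ≤ M ^ s := by
    intro n
    have h2 : ((∑' k, |zn n k| ^ s) ^ (1/s)) ^ s ≤ M ^ s :=
      Real.rpow_le_rpow (Real.rpow_nonneg (htsum_nonneg n) _) (hCM n) hspos.le
    rwa [← Real.rpow_mul (htsum_nonneg n), one_div_mul_cancel hspos.ne',
      Real.rpow_one] at h2
  set D := M ^ (β/p - s) * M ^ s with hDdef
  have hpsiS : ∀ n, Summable fun k => |psi p (zn n) k| ^ β :=
    fun n => (psi_memLp hp0 hspos hsp _ (hzn n) (hcbd n)).1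
  have hDb : ∀ n, ∑' k, |psi p (zn n) k| ^ β ≤ D := by
    intro n
    refine ((psi_memLp hp0 hspos hsp _ (hzn n) (hcbd n)).2).trans ?_
    exact mul_le_mul_of_nonneg_left (hsum_le n) (Real.rpow_nonneg hM0.le _)
  -- bound for the limit zb
  have hzbbd : ∀ k, |zb k| ≤ max 1 ((∑' j, |zb j| ^ s) ^ (1/s)) :=
    fun k => (coord_le hspos zb hzb k).trans (le_max_right _ _)
  have hpsibS : Summable fun k => |psi p zb k| ^ β :=
    (psi_memLp hp0 hspos hsp zb hzb hzbbd).1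
  set Db := (max 1 ((∑' j, |zb j| ^ s) ^ (1/s))) ^ (β/p - s) * ∑' k, |zb k| ^ s with hDbdef
  have hDbb : ∑' k, |psi p zb k| ^ β ≤ Db :=
    (psi_memLp hp0 hspos hsp zb hzb hzbbd).2
  set E := max D Db with hEdef
  have hE0 : 0 ≤ E := by
    apply le_trans _ (le_max_left D Db)
    exact mul_nonneg (Real.rpow_nonneg hM0.le _) (Real.rpow_nonneg hM0.le _)
  set E1 := E ^ (1/β) with hE1def
  have hE1 : 0 ≤ E1 := Real.rpow_nonneg hE0 _
  -- the weak convergence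
  intro v hv
  have hvs : Summable fun k => |v k| ^ s := by rw [MemLp', hβe] at hv; exact hv
  rw [Metric.tendsto_atTop]
  intro ε hε
  -- choose K with small tail
  have htail : Tendsto (fun K => ∑' j, |v (j + K)| ^ s) atTop (nhds 0) :=
    tendsto_sum_nat_add (fun k => |v k| ^ s)
  have htail2 : Tendsto (fun K => (∑' j, |v (j + K)| ^ s) ^ (1/s)) atTop (nhds 0) := by
    have hc : ContinuousAt (fun x : ℝ => x ^ (1/s)) 0 :=
      Real.continuousAt_rpow_const _ _ (Or.inr (by positivity))
    have h := hc.tendsto.comp htail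
    rw [show ((0:ℝ) ^ ((1:ℝ)/s)) = 0 from Real.zero_rpow (by positivity)] at h
    exact h
  have hE11 : 0 < E1 + 1 := by linarith
  obtain ⟨K, hK⟩ := (htail2.eventually
    (eventually_lt_nhds (show (0:ℝ) < ε/(4*(E1+1)) by positivity))).exists
  -- finite part converges
  have hfin : Tendsto (fun n => ∑ k ∈ Finset.range K, v k * psi p (zn n) k) atTop
      (nhds (∑ k ∈ Finset.range K, v k * psi p zb k)) :=
    tendsto_finset_sum _ (fun k _ => (hpsi_coord k).const_mul (v k))
  obtain ⟨N, hN⟩ := (Metric.tendsto_atTop.1 hfin) (ε/2) (by positivity)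
  refine ⟨N, fun n hn => ?_⟩
  -- summability of the pairings
  have hsnun : Summable fun k => v k * psi p (zn n) k :=
    (pairing hsconj v _ hvs (hpsiS n)).1
  have hsb : Summable fun k => v k * psi p zb k :=
    (pairing hsconj v _ hvs hpsibS).1
  -- tail bound, uniform
  have hvt : (0:ℝ) ≤ (∑' j, |v (j + K)| ^ s) ^ (1/s) :=
    Real.rpow_nonneg (tsum_nonneg fun j => Real.rpow_nonneg (abs_nonneg _) _) _
  have htailbd : ∀ (w : ℕ → ℝ), (Summable fun k => |w k| ^ β) →
      (∑' k, |w k| ^ β) ≤ E →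
      |∑' j, v (j + K) * w (j + K)| ≤ (∑' j, |v (j + K)| ^ s) ^ (1/s) * E1 := by
    intro w hwS hwE
    have hvshift : Summable fun j => |v (j + K)| ^ s :=
      (summable_nat_add_iff K).2 hvs
    have hwshift : Summable fun j => |w (j + K)| ^ β :=
      (summable_nat_add_iff K).2 hwS
    have hp2 := (pairing hsconj (fun j => v (j + K)) (fun j => w (j + K))
      hvshift hwshift).2
    refine hp2.trans ?_
    apply mul_le_mul_of_nonneg_left _ hvt
    -- (∑' shifted |w|^β)^(1/β) ≤ E1
    have hle2 : ∑' j, |w (j + K)| ^ β ≤ E := by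
      have heq := Summable.sum_add_tsum_nat_add K hwS
      have hfn : (0:ℝ) ≤ ∑ k ∈ Finset.range K, |w k| ^ β :=
        Finset.sum_nonneg fun k _ => Real.rpow_nonneg (abs_nonneg _) _
      have : ∑' j, |w (j + K)| ^ β ≤ ∑' k, |w k| ^ β := by linarith
      exact this.trans hwE
    exact Real.rpow_le_rpow
      (tsum_nonneg fun j => Real.rpow_nonneg (abs_nonneg _) _) hle2 (by positivity)
  have htn : |∑' j, v (j + K) * psi p (zn n) (j + K)|
      ≤ (∑' j, |v (j + K)| ^ s) ^ (1/s) * E1 :=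
    htailbd _ (hpsiS n) ((hDb n).trans (le_max_left _ _))
  have htb : |∑' j, v (j + K) * psi p zb (j + K)|
      ≤ (∑' j, |v (j + K)| ^ s) ^ (1/s) * E1 :=
    htailbd _ hpsibS (hDbb.trans (le_max_right _ _))
  have htail_small : (∑' j, |v (j + K)| ^ s) ^ (1/s) * E1 < ε/4 := by
    calc (∑' j, |v (j + K)| ^ s) ^ (1/s) * E1
        ≤ (∑' j, |v (j + K)| ^ s) ^ (1/s) * (E1 + 1) := by
          apply mul_le_mul_of_nonneg_left (by linarith) hvt
      _ < (ε/(4*(E1+1))) * (E1 + 1) := by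
          apply mul_lt_mul_of_pos_right hK hE11
      _ = ε/4 := by field_simp
  -- decompose and conclude
  have e1 : (∑' k, v k * psi p (zn n) k)
      = (∑ k ∈ Finset.range K, v k * psi p (zn n) k)
        + ∑' j, v (j + K) * psi p (zn n) (j + K) :=
    (Summable.sum_add_tsum_nat_add K hsnun).symm
  have e2 : (∑' k, v k * psi p zb k)
      = (∑ k ∈ Finset.range K, v k * psi p zb k)
        + ∑' j, v (j + K) * psi p zb (j + K) :=
    (Summable.sum_add_tsum_nat_add K hsb).symm
  have hfin_small : |(∑ k ∈ Finset.range K, v k * psi p (zn n) k)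
      - ∑ k ∈ Finset.range K, v k * psi p zb k| < ε/2 := by
    have := hN n hn
    rwa [Real.dist_eq] at this
  show dist (∑' k, v k * psi p (zn n) k) (∑' k, v k * psi p zb k) < ε
  rw [Real.dist_eq, e1, e2]
  set Sn := ∑ k ∈ Finset.range K, v k * psi p (zn n) k
  set Sb := ∑ k ∈ Finset.range K, v k * psi p zb k
  set Tn := ∑' j, v (j + K) * psi p (zn n) (j + K)
  set Tb := ∑' j, v (j + K) * psi p zb (j + K)
  have habs1 : |Sn + Tn - (Sb + Tb)| ≤ |Sn - Sb| + (|Tn| + |Tb|) := by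
    have h1 : Sn + Tn - (Sb + Tb) = (Sn - Sb) + (Tn - Tb) := by ring
    rw [h1]
    refine (abs_add_le _ _).trans ?_
    have h2 : |Tn - Tb| ≤ |Tn| + |Tb| := by
      rw [sub_eq_add_neg]
      exact (abs_add_le _ _).trans (by rw [abs_neg])
    linarith
  have := htail_small
  calc |Sn + Tn - (Sb + Tb)| ≤ |Sn - Sb| + (|Tn| + |Tb|) := habs1
    _ < ε/2 + (ε/4 + ε/4) := by
        have h3 : |Tn| < ε/4 := lt_of_le_of_lt htn htail_small
        have h4 : |Tb| < ε/4 := lt_of_le_of_lt htb htail_small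
        have h5 : |Sn - Sb| < ε/2 := hfin_small
        linarith
    _ = ε := by ring
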